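/- For every 0 ≤ λ < √(μ/2), the function u(x) = √(μ/2)(3 tanh²((2μ)^{1/4} x + tanh^{-1}√(2/3 + (1/3)√(2/μ) λ)) - 2), defined for x > 0, solves (1/2)u'' = 2u² - μ on (0,∞) with u(0) = λ and lim_{x→∞} u(x) = √(μ/2). -/

import Mathlib

open Real Filter

/-- Inverse hyperbolic tangent on `(-1, 1)`. -/
noncomputable def artanh (y : ℝ) : ℝ := (1/2) * Real.log ((1 + y) / (1 - y))

lemma tanh_eq_exp (t : ℝ) :
    Real.tanh t = (Real.exp (2*t) - 1) / (Real.exp (2*t) + 1) := by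
  rw [Real.tanh_eq_sinh_div_cosh, Real.sinh_eq, Real.cosh_eq]
  have h : Real.exp t ≠ 0 := (Real.exp_pos t).ne'
  have h2 : Real.exp (2*t) = Real.exp t * Real.exp t := by
    rw [two_mul, Real.exp_add]
  rw [h2, Real.exp_neg]
  field_simp

lemma tanh_artanh {y : ℝ} (h0 : -1 < y) (h1 : y < 1) : Real.tanh (_root_.artanh y) = y := by
  have hy1 : (0:ℝ) < 1 + y := by linarith
  have hy2 : (0:ℝ) < 1 - y := by linarith
  have hp : 0 < (1 + y) / (1 - y) := div_pos hy1 hy2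
  have he : Real.exp (2 * _root_.artanh y) = (1 + y) / (1 - y) := by
    rw [_root_.artanh, show 2 * ((1:ℝ)/2 * Real.log ((1 + y) / (1 - y)))
      = Real.log ((1+y)/(1-y)) by ring]
    exact Real.exp_log hp
  rw [tanh_eq_exp, he]
  rw [div_sub_one hy2.ne', div_add_one hy2.ne']
  rw [div_div_div_cancel_right₀]
  · field_simp
    ring
  · intro hc
    have : (1 + y - (1 - y)) = 2*y := by ring
    nlinarith [hc]

lemma hasDerivAt_tanh (t : ℝ) : HasDerivAt Real.tanh (1 - Real.tanh t ^ 2) t := by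
  have hcp := Real.cosh_pos t
  have hc : Real.cosh t ≠ 0 := hcp.ne'
  have h := (Real.hasDerivAt_sinh t).div (Real.hasDerivAt_cosh t) hc
  have heq : (Real.cosh t * Real.cosh t - Real.sinh t * Real.sinh t) / Real.cosh t ^ 2
      = 1 - Real.tanh t ^ 2 := by
    rw [Real.tanh_eq_sinh_div_cosh]
    field_simp
  rw [heq] at h
  have hfun : Real.tanh = fun x => Real.sinh x / Real.cosh x := by
    funext x; exact Real.tanh_eq_sinh_div_cosh x
  rw [hfun]
  exact h.congr_deriv (by simp only [Real.tanh_eq_sinh_div_cosh])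

lemma tendsto_tanh_atTop : Tendsto Real.tanh atTop (nhds 1) := by
  have h : Real.tanh = fun t => 1 - 2 / (Real.exp (2*t) + 1) := by
    funext t
    rw [tanh_eq_exp]
    have hne : Real.exp (2*t) + 1 ≠ 0 := by positivity
    field_simp
    ring
  rw [h]
  have h1 : Tendsto (fun t : ℝ => Real.exp (2*t) + 1) atTop atTop := by
    apply tendsto_atTop_add_const_right
    exact Real.tendsto_exp_atTop.comp (tendsto_id.const_mul_atTop two_pos)
  have h2 : Tendsto (fun t : ℝ => 2 / (Real.exp (2*t) + 1)) atTop (nhds 0) :=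
    tendsto_const_nhds.div_atTop h1
  have h3 : Tendsto (fun _ : ℝ => (1:ℝ)) atTop (nhds 1) := tendsto_const_nhds
  simpa using h3.sub h2

/-- For `0 ≤ λ < √(μ/2)`, `u(x) = √(μ/2)(3 tanh²((2μ)^{1/4} x + artanh √(2/3 + (1/3)√(2/μ)λ)) - 2)`
solves `(1/2)u'' = 2u² - μ` on `(0,∞)` with `u(0) = λ` and `u(∞) = √(μ/2)`. -/
theorem stmt_10 (μ lam : ℝ) (hμ : 0 < μ) (hlam0 : 0 ≤ lam) (hlam : lam < Real.sqrt (μ/2)) :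
    ∀ u : ℝ → ℝ,
      (∀ x : ℝ, u x = Real.sqrt (μ/2) *
        (3 * (Real.tanh ((2*μ) ^ ((1:ℝ)/4) * x
          + _root_.artanh (Real.sqrt (2/3 + (1/3) * Real.sqrt (2/μ) * lam)))) ^ 2 - 2)) →
      ∃ u' : ℝ → ℝ,
        (∀ x : ℝ, 0 < x →
          HasDerivAt u (u' x) x ∧ HasDerivAt u' (4 * (u x) ^ 2 - 2 * μ) x) ∧
        u 0 = lam ∧
        Tendsto u atTop (nhds (Real.sqrt (μ/2))) := by
  intro u hu
  set s := Real.sqrt (μ/2) with hs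
  set c := (2*μ) ^ ((1:ℝ)/4) with hc
  set a := _root_.artanh (Real.sqrt (2/3 + (1/3) * Real.sqrt (2/μ) * lam)) with ha
  set T : ℝ → ℝ := fun x => Real.tanh (c * x + a) with hT
  have huT : ∀ x, u x = s * (3 * (T x) ^ 2 - 2) := hu
  have hs2 : s ^ 2 = μ / 2 := Real.sq_sqrt (by positivity)
  have hcpos : 0 < c := Real.rpow_pos_of_pos (by positivity) _
  have hc2 : c ^ 2 = Real.sqrt (2*μ) := by
    rw [hc, ← Real.rpow_natCast ((2*μ) ^ ((1:ℝ)/4)) 2, ← Real.rpow_mul (by positivity),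
      Real.sqrt_eq_rpow]
    norm_num
  have hsc2 : s * c ^ 2 = μ := by
    rw [hc2, hs, ← Real.sqrt_mul (by positivity),
      show μ/2*(2*μ) = μ^2 by ring, Real.sqrt_sq hμ.le]
  -- derivative of T
  have hTd : ∀ x : ℝ, HasDerivAt T ((1 - T x ^ 2) * c) x := by
    intro x
    have hin : HasDerivAt (fun x : ℝ => c * x + a) c x := by
      simpa using ((hasDerivAt_id x).const_mul c).add_const a
    exact (hasDerivAt_tanh (c * x + a)).comp x hin
  refine ⟨fun x => 6 * s * c * (T x * (1 - T x ^ 2)), fun x _ => ?_, ?_, ?_⟩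
  · constructor
    · have h1 : HasDerivAt (fun x => s * (3 * (T x) ^ 2 - 2))
          (s * (3 * (2 * T x ^ 1 * ((1 - T x ^ 2) * c)))) x :=
        ((((hTd x).pow 2).const_mul 3).sub_const 2).const_mul s
      have : u = fun x => s * (3 * (T x) ^ 2 - 2) := funext huT
      rw [this]
      convert h1 using 1
      ring
    · have h1 : HasDerivAt (fun x => 1 - T x ^ 2)
          (-(2 * T x ^ 1 * ((1 - T x ^ 2) * c))) x := ((hTd x).pow 2).const_sub 1
      have h2 := ((hTd x).mul h1).const_mul (6 * s * c)
      refine h2.congr_deriv (Eq.symm ?_)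
      rw [huT x]
      linear_combination (-(6*(1 - T x ^ 2)*(1 - 3 * T x ^ 2))) * hsc2
        + (4*(3 * T x ^ 2 - 2)^2) * hs2
  · -- u 0 = lam
    have hinv : Real.sqrt (2/μ) * s = 1 := by
      rw [hs, ← Real.sqrt_mul (by positivity), show 2/μ*(μ/2) = 1 * 1 by field_simp]
      simp
    have hspos : 0 < s := Real.sqrt_pos.2 (by positivity)
    have hinvpos : 0 < Real.sqrt (2/μ) := Real.sqrt_pos.2 (by positivity)
    set y := 2/3 + (1/3) * Real.sqrt (2/μ) * lam with hy
    have hylt : y < 1 := by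
      have : Real.sqrt (2/μ) * lam < Real.sqrt (2/μ) * s :=
        mul_lt_mul_of_pos_left hlam hinvpos
      rw [hinv] at this
      rw [hy]; nlinarith
    have hy0 : 0 ≤ y := by positivity
    have hsy1 : Real.sqrt y < 1 := by
      rw [show (1:ℝ) = Real.sqrt 1 by simp]
      exact Real.sqrt_lt_sqrt hy0 hylt
    have hsy0 : (0:ℝ) ≤ Real.sqrt y := Real.sqrt_nonneg y
    have hta : Real.tanh a = Real.sqrt y := by
      rw [ha]; exact tanh_artanh (by linarith) hsy1
    have hT0 : T 0 = Real.sqrt y := by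
      rw [hT]; simp only [mul_zero, zero_add]; exact hta
    rw [huT 0, hT0, Real.sq_sqrt hy0, hy]
    linear_combination lam * hinv
  · -- limit
    have hTt : Tendsto T atTop (nhds 1) := by
      apply tendsto_tanh_atTop.comp
      exact tendsto_atTop_add_const_right _ a (tendsto_id.const_mul_atTop hcpos)
    have : Tendsto (fun x => s * (3 * (T x) ^ 2 - 2)) atTop (nhds (s * (3 * 1 ^ 2 - 2))) :=
      (((hTt.pow 2).const_mul 3).sub_const 2).const_mul s
    have hequ : u = fun x => s * (3 * (T x) ^ 2 - 2) := funext huT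
    rw [hequ]
    rw [show s * (3 * 1 ^ 2 - 2) = s by ring] at this
    exact this
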